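/- For every n ≥ 2, there is no c-competitive randomized online algorithm of type (n−1, n) with c < H_{n−1}: for every randomized online algorithm A of type (n−1, n), every real c < H_{n−1}, and every constant a, there exists a request sequence σ with E[C_A(σ)] > c·OPT(σ) + a. -/

import Mathlib

/-!
Paging model: vertices are `Fin n`, configurations are `k`-element subsets of
`Fin n`.  `OPT` is the optimal offline cost and `expCost` the expected cost of a
randomized online algorithm (given by its transition kernel `RandAlg.step`),
starting from `{0,…,k−1}`; `harmonic k` (from Mathlib) is `H_k`.

STATEMENT: For every `n ≥ 2`, there is no `c`-competitive randomized online
algorithm of type `(n−1, n)` with `c < H_{n−1}`: for every randomized online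
algorithm `A` of type `(n−1, n)`, every real `c < H_{n−1}`, and every constant
`a`, there exists a request sequence `σ` with `E[C_A(σ)] > c·OPT(σ) + a`.
-/

open scoped ENNReal

/-- The initial configuration `{0, …, k−1}` as a subset of `Fin n`. -/
def initConf (k n : ℕ) : Finset (Fin n) :=
  Finset.univ.filter (fun v => (v : ℕ) < k)

/-- The cost of a sequence of configurations, starting from configuration `C`:
the sum over consecutive steps of the number of newly covered vertices. -/
def listCost {n : ℕ} : Finset (Fin n) → List (Finset (Fin n)) → ℕ
  | _, [] => 0
  | C, D :: L => (D \ C).card + listCost D L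

/-- `Cs` is a service of the request sequence `σ` by `k`-element configurations:
the `t`-th configuration covers the `t`-th request. -/
def Serves {n : ℕ} (k : ℕ) (σ : List (Fin n)) (Cs : List (Finset (Fin n))) : Prop :=
  List.Forall₂ (· ∈ ·) σ Cs ∧ ∀ C ∈ Cs, C.card = k

/-- The optimal offline cost of serving `σ`, starting from `{0,…,k−1}`. -/
noncomputable def OPT (k n : ℕ) (σ : List (Fin n)) : ℕ :=
  sInf {m | ∃ Cs, Serves k σ Cs ∧ listCost (initConf k n) Cs = m}

/-- A (transition kernel of a) randomized online algorithm: given the request history,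
the current configuration and a new request, produce a distribution over configurations. -/
abbrev Kernel (n : ℕ) := List (Fin n) → Finset (Fin n) → Fin n → PMF (Finset (Fin n))

/-- The distribution over configuration sequences induced by running kernel `K`
on request sequence `σ`, with history `hist` and current configuration `C`. -/
noncomputable def runFrom {n : ℕ} (K : Kernel n) :
    List (Fin n) → List (Fin n) → Finset (Fin n) → PMF (List (Finset (Fin n)))
  | [], _, _ => PMF.pure []
  | r :: rest, hist, C =>
      (K hist C r).bind fun C' =>
        (runFrom K rest (hist ++ [r]) C').map fun L => C' :: L

/-- The distribution over configuration sequences induced by running kernel `K`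
on request sequence `σ`, starting from the configuration `{0,…,k−1}`. -/
noncomputable def run {n : ℕ} (k : ℕ) (K : Kernel n) (σ : List (Fin n)) :
    PMF (List (Finset (Fin n))) :=
  runFrom K σ [] (initConf k n)

/-- The expected cost of the randomized online algorithm with kernel `K` on `σ`. -/
noncomputable def expCost {n : ℕ} (k : ℕ) (K : Kernel n) (σ : List (Fin n)) : ℝ :=
  ∑' Cs : List (Finset (Fin n)),
    ((run k K σ) Cs).toReal * (listCost (initConf k n) Cs : ℝ)

/-- One step of the marking process: mark `r`; if `k+1` vertices are marked,
erase all marks except the one on `r`. -/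
def markUpdate {n : ℕ} (k : ℕ) (M : Finset (Fin n)) (r : Fin n) : Finset (Fin n) :=
  if (insert r M).card = k + 1 then {r} else insert r M

/-- The set of marked vertices after processing the request sequence `σ`
(initially the vertices `{0,…,k−1}` are marked). -/
def marksAfter {n : ℕ} (k : ℕ) (σ : List (Fin n)) : Finset (Fin n) :=
  σ.foldl (markUpdate k) (initConf k n)

/-- The marking algorithm of type `(k,n)`: on a request `r`, first update the marks;
if `r` is covered do nothing, and otherwise evict a uniformly random unmarked
covered vertex and move its server to `r`. -/
noncomputable def markingKernel (k n : ℕ) : Kernel n := fun hist C r =>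
  let M := marksAfter k (hist ++ [r])
  if r ∈ C then PMF.pure C
  else if h : (C \ M).Nonempty then
    (PMF.uniformOfFinset (C \ M) h).map fun u => insert r (C.erase u)
  else PMF.pure (insert r (C.erase (if h2 : C.Nonempty then C.min' h2 else r)))

/-- A randomized online algorithm of type `(k,n)`: a transition kernel which,
from any `k`-element configuration, moves to a configuration that covers the
request and again has `k` elements. -/
structure RandAlg (k n : ℕ) where
  step : Kernel n
  valid : ∀ (hist : List (Fin n)) (C : Finset (Fin n)) (r : Fin n), C.card = k →
    ∀ C' ∈ (step hist C r).support, r ∈ C' ∧ C'.card = k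

section PartA
variable {n : ℕ}

noncomputable def ecostE (K : Kernel n) (σ hist : List (Fin n)) (C : Finset (Fin n)) : ℝ≥0∞ :=
  ∑' Cs, (runFrom K σ hist C Cs) * (listCost C Cs : ℝ≥0∞)

lemma ecostE_nil (K : Kernel n) (hist : List (Fin n)) (C : Finset (Fin n)) :
    ecostE K [] hist C = 0 := by
  unfold ecostE
  rw [show runFrom K [] hist C = PMF.pure [] from rfl]
  have : ∀ Cs : List (Finset (Fin n)),
      (PMF.pure ([] : List (Finset (Fin n)))) Cs * (listCost C Cs : ℝ≥0∞)
        = if Cs = [] then 0 else 0 := by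
    intro Cs
    rw [PMF.pure_apply]
    by_cases h : Cs = []
    · subst h; simp; rfl
    · simp [h]
  rw [tsum_congr this]; simp

lemma tsum_map_cons (q : PMF (List (Finset (Fin n)))) (C' : Finset (Fin n))
    (g : List (Finset (Fin n)) → ℝ≥0∞) :
    ∑' Cs, (q.map (C' :: ·)) Cs * g Cs = ∑' L, q L * g (C' :: L) := by
  have h1 : ∀ Cs, (q.map (C' :: ·)) Cs * g Cs
      = ∑' L, if Cs = C' :: L then q L * g (C' :: L) else 0 := by
    intro Cs
    rw [PMF.map_apply, ← ENNReal.tsum_mul_right]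
    congr 1 with L
    by_cases h : Cs = C' :: L
    · subst h; simp
    · simp [h]
  rw [tsum_congr h1, ENNReal.tsum_comm]
  congr 1 with L
  exact tsum_ite_eq (C' :: L) _

lemma ecostE_cons (K : Kernel n) (r : Fin n) (rest hist : List (Fin n)) (C : Finset (Fin n)) :
    ecostE K (r :: rest) hist C
      = ∑' C', K hist C r C' *
          (((C' \ C).card : ℝ≥0∞) + ecostE K rest (hist ++ [r]) C') := by
  unfold ecostE
  rw [show runFrom K (r :: rest) hist C
      = (K hist C r).bind fun C' => (runFrom K rest (hist ++ [r]) C').map (C' :: ·) from rfl]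
  have h1 : ∀ Cs, ((K hist C r).bind fun C' =>
        (runFrom K rest (hist ++ [r]) C').map (C' :: ·)) Cs * (listCost C Cs : ℝ≥0∞)
      = ∑' C', K hist C r C' *
          (((runFrom K rest (hist ++ [r]) C').map (C' :: ·)) Cs * (listCost C Cs : ℝ≥0∞)) := by
    intro Cs
    rw [PMF.bind_apply, ← ENNReal.tsum_mul_right]
    congr 1 with C'
    ring
  rw [tsum_congr h1, ENNReal.tsum_comm]
  congr 1 with C'
  rw [ENNReal.tsum_mul_left]
  congr 1
  rw [tsum_map_cons]
  have h2 : ∀ L : List (Finset (Fin n)),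
      runFrom K rest (hist ++ [r]) C' L * (listCost C (C' :: L) : ℝ≥0∞)
        = runFrom K rest (hist ++ [r]) C' L * ((C' \ C).card : ℝ≥0∞)
          + runFrom K rest (hist ++ [r]) C' L * (listCost C' L : ℝ≥0∞) := by
    intro L
    rw [show listCost C (C' :: L) = (C' \ C).card + listCost C' L from rfl]
    push_cast
    ring
  rw [tsum_congr h2, ENNReal.tsum_add, ENNReal.tsum_mul_right, PMF.tsum_coe, one_mul]

lemma ecostE_le (K : Kernel n) (σ : List (Fin n)) : ∀ (hist : List (Fin n)) (C : Finset (Fin n)),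
    ecostE K σ hist C ≤ (n : ℝ≥0∞) * σ.length := by
  induction σ with
  | nil => intro hist C; simp [ecostE_nil]
  | cons r rest ih =>
    intro hist C
    rw [ecostE_cons]
    calc ∑' C', K hist C r C' * (((C' \ C).card : ℝ≥0∞) + ecostE K rest (hist ++ [r]) C')
        ≤ ∑' C', K hist C r C' * ((n : ℝ≥0∞) + (n : ℝ≥0∞) * rest.length) := by
          apply ENNReal.tsum_le_tsum
          intro C'
          apply mul_le_mul_right
          apply add_le_add
          · exact_mod_cast Nat.cast_le.mpr ((C' \ C).card_le_univ.trans (by simp))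
          · exact ih _ _
      _ = (n : ℝ≥0∞) + (n : ℝ≥0∞) * rest.length := by
          rw [ENNReal.tsum_mul_right, PMF.tsum_coe, one_mul]
      _ ≤ (n : ℝ≥0∞) * (r :: rest).length := by
          rw [List.length_cons]
          push_cast
          rw [mul_add, mul_one, add_comm]

lemma ecostE_ne_top (K : Kernel n) (σ hist : List (Fin n)) (C : Finset (Fin n)) :
    ecostE K σ hist C ≠ ⊤ := by
  have h2 : ((n : ℝ≥0∞) * σ.length) < ⊤ := by
    apply ENNReal.mul_lt_top <;> simp [ENNReal.natCast_lt_top]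
  exact ((ecostE_le K σ hist C).trans_lt h2).ne

lemma expCost_eq (k : ℕ) (K : Kernel n) (σ : List (Fin n)) :
    expCost k K σ = (ecostE K σ [] (initConf k n)).toReal := by
  unfold expCost ecostE run
  rw [ENNReal.tsum_toReal_eq]
  · congr 1 with Cs
    rw [ENNReal.toReal_mul]
    simp
  · intro Cs
    exact ENNReal.mul_ne_top (PMF.apply_ne_top _ _) (ENNReal.natCast_ne_top _)

end PartA

lemma sum_fn_succ {M : Type*} [AddCommMonoid M] {n T : ℕ}
    (f : (Fin (T+1) → Fin n) → M) :
    ∑ σ : Fin (T+1) → Fin n, f σ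
      = ∑ r : Fin n, ∑ σ' : Fin T → Fin n, f (Fin.cons r σ') := by
  calc ∑ σ : Fin (T+1) → Fin n, f σ
      = ∑ p : Fin n × (Fin T → Fin n), f (Fin.cons p.1 p.2) :=
        (Fintype.sum_equiv (Fin.consEquiv (fun _ => Fin n))
          (fun p => f (Fin.cons p.1 p.2)) f (fun p => rfl)).symm
    _ = ∑ r : Fin n, ∑ σ' : Fin T → Fin n, f (Fin.cons r σ') := Fintype.sum_prod_type _

lemma ofFn_cons {α : Type*} {T : ℕ} (r : α) (σ' : Fin T → α) :
    List.ofFn (Fin.cons r σ') = r :: List.ofFn σ' := by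
  rw [List.ofFn_succ]
  simp

lemma lowerA {n : ℕ} (hn : 2 ≤ n) (A : RandAlg (n-1) n) :
    ∀ (T : ℕ) (hist : List (Fin n)) (C : Finset (Fin n)), C.card = n - 1 →
      (T : ℝ≥0∞) * (n : ℝ≥0∞)^T
        ≤ (n : ℝ≥0∞) * ∑ σ : Fin T → Fin n, ecostE A.step (List.ofFn σ) hist C := by
  intro T
  induction T with
  | zero => intro hist C _; simp
  | succ T ih =>
    intro hist C hC
    have key : ∀ r : Fin n,
        (T : ℝ≥0∞) * (n:ℝ≥0∞)^T + (if r ∈ C then 0 else (n:ℝ≥0∞)^(T+1))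
          ≤ (n:ℝ≥0∞) * ∑ σ' : Fin T → Fin n, ecostE A.step (r :: List.ofFn σ') hist C := by
      intro r
      set p := A.step hist C r with hp
      have hrw : ∀ σ' : Fin T → Fin n, ecostE A.step (r :: List.ofFn σ') hist C
          = ∑' C', p C' * (((C' \ C).card : ℝ≥0∞)
              + ecostE A.step (List.ofFn σ') (hist ++ [r]) C') := fun σ' => ecostE_cons _ _ _ _ _
      rw [Finset.sum_congr rfl (fun σ' _ => hrw σ')]
      rw [← Summable.tsum_finsetSum (fun (σ' : Fin T → Fin n) _ => ENNReal.summable)]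
      have hrw2 : ∀ C' : Finset (Fin n),
          (∑ σ' : Fin T → Fin n, p C' * (((C' \ C).card : ℝ≥0∞)
              + ecostE A.step (List.ofFn σ') (hist ++ [r]) C'))
            = p C' * ((n:ℝ≥0∞)^T * ((C' \ C).card : ℝ≥0∞)
              + ∑ σ' : Fin T → Fin n, ecostE A.step (List.ofFn σ') (hist ++ [r]) C') := by
        intro C'
        rw [← Finset.mul_sum, Finset.sum_add_distrib, Finset.sum_const]
        congr 2
        rw [nsmul_eq_mul]
        congr 1
        simp [Fintype.card_fun]
      rw [tsum_congr hrw2, ← ENNReal.tsum_mul_left]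
      have step : ∀ C' : Finset (Fin n),
          p C' * ((n:ℝ≥0∞)^(T+1) * ((C' \ C).card : ℝ≥0∞) + (T : ℝ≥0∞) * (n:ℝ≥0∞)^T)
            ≤ (n:ℝ≥0∞) * (p C' * ((n:ℝ≥0∞)^T * ((C' \ C).card : ℝ≥0∞)
              + ∑ σ' : Fin T → Fin n, ecostE A.step (List.ofFn σ') (hist ++ [r]) C')) := by
        intro C'
        by_cases h0 : p C' = 0
        · simp [h0]
        · have hsup : C' ∈ p.support := by simpa [PMF.mem_support_iff] using h0
          have hv := A.valid hist C r hC C' hsup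
          have hIH := ih (hist ++ [r]) C' hv.2
          calc p C' * ((n:ℝ≥0∞)^(T+1) * ((C' \ C).card : ℝ≥0∞) + (T : ℝ≥0∞) * (n:ℝ≥0∞)^T)
              ≤ p C' * ((n:ℝ≥0∞)^(T+1) * ((C' \ C).card : ℝ≥0∞)
                + (n:ℝ≥0∞) * ∑ σ' : Fin T → Fin n,
                    ecostE A.step (List.ofFn σ') (hist ++ [r]) C') := by
                exact mul_le_mul_right (add_le_add_right hIH _) _
            _ = (n:ℝ≥0∞) * (p C' * ((n:ℝ≥0∞)^T * ((C' \ C).card : ℝ≥0∞)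
                + ∑ σ' : Fin T → Fin n, ecostE A.step (List.ofFn σ') (hist ++ [r]) C')) := by
                ring
      calc (T : ℝ≥0∞) * (n:ℝ≥0∞)^T + (if r ∈ C then 0 else (n:ℝ≥0∞)^(T+1))
          ≤ (n:ℝ≥0∞)^(T+1) * (∑' C', p C' * ((C' \ C).card : ℝ≥0∞)) + (T : ℝ≥0∞) * (n:ℝ≥0∞)^T := by
            rw [add_comm]
            apply add_le_add_left
            by_cases hr : r ∈ C
            · simp [hr]
            · simp only [hr, if_false]
              have h1 : (1:ℝ≥0∞) ≤ ∑' C', p C' * ((C' \ C).card : ℝ≥0∞) := by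
                rw [show (1:ℝ≥0∞) = ∑' C', p C' * 1 by rw [ENNReal.tsum_mul_right, PMF.tsum_coe, one_mul]]
                apply ENNReal.tsum_le_tsum
                intro C'
                by_cases h0 : p C' = 0
                · simp [h0]
                · have hsup : C' ∈ p.support := by simpa [PMF.mem_support_iff] using h0
                  have hv := A.valid hist C r hC C' hsup
                  apply mul_le_mul_right
                  have : r ∈ C' \ C := Finset.mem_sdiff.mpr ⟨hv.1, hr⟩
                  have hcard : 1 ≤ (C' \ C).card := Finset.card_pos.mpr ⟨r, this⟩
                  exact_mod_cast Nat.one_le_cast.mpr hcard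
              calc (n:ℝ≥0∞)^(T+1) = (n:ℝ≥0∞)^(T+1) * 1 := by rw [mul_one]
                _ ≤ _ := mul_le_mul_right h1 _
        _ = ∑' C', p C' * ((n:ℝ≥0∞)^(T+1) * ((C' \ C).card : ℝ≥0∞) + (T : ℝ≥0∞) * (n:ℝ≥0∞)^T) := by
            rw [tsum_congr (fun C' => mul_add (p C') _ _), ENNReal.tsum_add,
              ENNReal.tsum_mul_right, PMF.tsum_coe, one_mul]
            congr 1
            rw [← ENNReal.tsum_mul_left]
            congr 1 with C'
            ring
        _ ≤ _ := ENNReal.tsum_le_tsum step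
    -- combine over r
    rw [sum_fn_succ (fun σ => ecostE A.step (List.ofFn σ) hist C)]
    have hrw3 : ∀ r : Fin n, ∑ σ' : Fin T → Fin n, ecostE A.step (List.ofFn (Fin.cons r σ')) hist C
        = ∑ σ' : Fin T → Fin n, ecostE A.step (r :: List.ofFn σ') hist C := by
      intro r
      exact Finset.sum_congr rfl (fun σ' _ => by rw [ofFn_cons])
    rw [Finset.sum_congr rfl (fun r _ => hrw3 r), Finset.mul_sum]
    have hex : Cᶜ.Nonempty := by
      rw [← Finset.card_pos, Finset.card_compl, hC, Fintype.card_fin]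
      omega
    obtain ⟨r₀, hr₀'⟩ := hex
    have hr₀ : r₀ ∉ C := Finset.mem_compl.mp hr₀'
    calc ((T+1 : ℕ) : ℝ≥0∞) * (n:ℝ≥0∞)^(T+1)
        = ∑ _r : Fin n, (T : ℝ≥0∞) * (n:ℝ≥0∞)^T + (n:ℝ≥0∞)^(T+1) := by
          rw [Finset.sum_const, Finset.card_univ, Fintype.card_fin, nsmul_eq_mul]
          push_cast
          ring
      _ ≤ ∑ r : Fin n, ((T : ℝ≥0∞) * (n:ℝ≥0∞)^T + (if r ∈ C then 0 else (n:ℝ≥0∞)^(T+1))) := by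
          rw [Finset.sum_add_distrib]
          apply add_le_add_right
          calc (n:ℝ≥0∞)^(T+1) = (if r₀ ∈ C then 0 else (n:ℝ≥0∞)^(T+1)) := by simp [hr₀]
            _ ≤ _ := Finset.single_le_sum (f := fun r => if r ∈ C then 0 else (n:ℝ≥0∞)^(T+1)) (fun _ _ => zero_le) (Finset.mem_univ r₀)
      _ ≤ _ := Finset.sum_le_sum (fun r _ => key r)

section PartB
variable {n : ℕ}

lemma harmonic_mono : Monotone harmonic := monotone_nat_of_le_succ (fun m => by
  rw [harmonic_succ]
  have : (0:ℚ) ≤ (↑(m+1))⁻¹ := by positivity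
  linarith)

noncomputable def servC (S : Finset (Fin n)) : Finset (Fin n) :=
  if h : Sᶜ.Nonempty then Finset.univ.erase (Sᶜ.min' h) else ∅

lemma compl_nonempty_of_card_lt {S : Finset (Fin n)} (h : S.card < n) : Sᶜ.Nonempty := by
  rw [← Finset.card_pos, Finset.card_compl, Fintype.card_fin]
  omega

lemma servC_eq {S : Finset (Fin n)} (h : Sᶜ.Nonempty) :
    servC S = Finset.univ.erase (Sᶜ.min' h) := by
  unfold servC; rw [dif_pos h]

lemma servC_card {S : Finset (Fin n)} (h : Sᶜ.Nonempty) : (servC S).card = n - 1 := by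
  rw [servC_eq h, Finset.card_erase_of_mem (Finset.mem_univ _), Finset.card_univ,
    Fintype.card_fin]

lemma mem_servC {S : Finset (Fin n)} (h : Sᶜ.Nonempty) {x : Fin n} (hx : x ∈ S) :
    x ∈ servC S := by
  rw [servC_eq h, Finset.mem_erase]
  refine ⟨?_, Finset.mem_univ _⟩
  intro hEq
  have := Sᶜ.min'_mem h
  rw [← hEq, Finset.mem_compl] at this
  exact this hx

def phaseFut (k : ℕ) : List (Fin n) → Finset (Fin n) → Finset (Fin n)
  | [], S => S
  | r :: rest, S => if (insert r S).card = k + 1 then S else phaseFut k rest (insert r S)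

noncomputable def servL (k : ℕ) : List (Fin n) → Finset (Fin n) → List (Finset (Fin n))
  | [], _ => []
  | r :: rest, S => servC (phaseFut k rest (markUpdate k S r)) :: servL k rest (markUpdate k S r)

def resets (k : ℕ) : List (Fin n) → Finset (Fin n) → ℕ
  | [], _ => 0
  | r :: rest, S => (if (insert r S).card = k + 1 then 1 else 0) + resets k rest (markUpdate k S r)

lemma mem_markUpdate (k : ℕ) (S : Finset (Fin n)) (r : Fin n) : r ∈ markUpdate k S r := by
  unfold markUpdate; split <;> simp

lemma markUpdate_card {k : ℕ} (hk : 1 ≤ k) {S : Finset (Fin n)} (h : S.card ≤ k) (r : Fin n) :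
    (markUpdate k S r).card ≤ k := by
  unfold markUpdate
  split
  · simpa using hk
  · have h1 : (insert r S).card ≤ S.card + 1 := Finset.card_insert_le _ _
    omega

lemma markUpdate_nonempty (k : ℕ) (S : Finset (Fin n)) (r : Fin n) :
    (markUpdate k S r).Nonempty := ⟨r, mem_markUpdate k S r⟩

lemma subset_phaseFut (k : ℕ) : ∀ (σ : List (Fin n)) (S : Finset (Fin n)),
    S ⊆ phaseFut k σ S := by
  intro σ
  induction σ with
  | nil => intro S; exact subset_rfl
  | cons r rest ih =>
    intro S
    show S ⊆ if (insert r S).card = k + 1 then S else phaseFut k rest (insert r S)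
    split
    · exact subset_rfl
    · exact (Finset.subset_insert r S).trans (ih (insert r S))

lemma phaseFut_card (k : ℕ) : ∀ (σ : List (Fin n)) (S : Finset (Fin n)), S.card ≤ k →
    (phaseFut k σ S).card ≤ k := by
  intro σ
  induction σ with
  | nil => intro S h; exact h
  | cons r rest ih =>
    intro S h
    show (if (insert r S).card = k + 1 then S else phaseFut k rest (insert r S)).card ≤ k
    split
    · exact h
    · refine ih _ ?_
      have h1 : (insert r S).card ≤ S.card + 1 := Finset.card_insert_le _ _
      omega

lemma servL_serves (hn : 2 ≤ n) : ∀ (σ : List (Fin n)) (S : Finset (Fin n)),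
    S.card ≤ n - 1 → Serves (n - 1) σ (servL (n-1) σ S) := by
  intro σ
  induction σ with
  | nil => intro S _; exact ⟨List.Forall₂.nil, fun C hC => absurd hC (List.not_mem_nil (a := C))⟩
  | cons r rest ih =>
    intro S hS
    have hk : 1 ≤ n - 1 := by omega
    have hS' : (markUpdate (n-1) S r).card ≤ n - 1 := markUpdate_card hk hS r
    have hP : (phaseFut (n-1) rest (markUpdate (n-1) S r)).card ≤ n - 1 :=
      phaseFut_card _ _ _ hS'
    have hPc : (phaseFut (n-1) rest (markUpdate (n-1) S r))ᶜ.Nonempty :=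
      compl_nonempty_of_card_lt (by omega)
    obtain ⟨h2, h3⟩ := ih (markUpdate (n-1) S r) hS'
    constructor
    · refine List.Forall₂.cons ?_ h2
      exact mem_servC hPc
        ((subset_phaseFut _ _ _) (mem_markUpdate _ S r))
    · intro C hC
      rcases List.mem_cons.mp hC with h | h
      · rw [h]; exact servC_card hPc
      · exact h3 C h

lemma erase_sdiff_card {x y : Fin n} :
    ((Finset.univ.erase y) \ (Finset.univ.erase x)).card ≤ 1 := by
  have : (Finset.univ.erase y) \ (Finset.univ.erase x) ⊆ {x} := by
    intro z hz
    rw [Finset.mem_sdiff, Finset.mem_erase, Finset.mem_erase] at hz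
    obtain ⟨⟨hzy, _⟩, h2⟩ := hz
    rw [Finset.mem_singleton]
    by_contra hzx
    exact h2 ⟨hzx, Finset.mem_univ z⟩
  calc _ ≤ ({x} : Finset (Fin n)).card := Finset.card_le_card this
    _ = 1 := Finset.card_singleton x

lemma servC_shape {S : Finset (Fin n)} (h : Sᶜ.Nonempty) : ∃ x, servC S = Finset.univ.erase x :=
  ⟨Sᶜ.min' h, servC_eq h⟩

lemma servL_cost_aux (hn : 2 ≤ n) : ∀ (σ : List (Fin n)) (S : Finset (Fin n)),
    S.card ≤ n - 1 →
    listCost (servC (phaseFut (n-1) σ S)) (servL (n-1) σ S) ≤ resets (n-1) σ S := by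
  intro σ
  induction σ with
  | nil => intro S _; exact Nat.le_refl 0
  | cons r rest ih =>
    intro S hS
    have hk : 1 ≤ n - 1 := by omega
    set S' := markUpdate (n-1) S r with hS'def
    have hS' : S'.card ≤ n - 1 := markUpdate_card hk hS r
    have hP' : (phaseFut (n-1) rest S')ᶜ.Nonempty :=
      compl_nonempty_of_card_lt (by have := phaseFut_card (n-1) rest S' hS'; omega)
    have hP : (phaseFut (n-1) (r :: rest) S)ᶜ.Nonempty :=
      compl_nonempty_of_card_lt (by have := phaseFut_card (n-1) (r :: rest) S hS; omega)
    show (servC (phaseFut (n-1) rest S') \ servC (phaseFut (n-1) (r :: rest) S)).card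
        + listCost (servC (phaseFut (n-1) rest S')) (servL (n-1) rest S')
      ≤ (if (insert r S).card = (n-1) + 1 then 1 else 0) + resets (n-1) rest S'
    by_cases hov : (insert r S).card = (n-1) + 1
    · rw [if_pos hov]
      have h1 : (servC (phaseFut (n-1) rest S') \ servC (phaseFut (n-1) (r :: rest) S)).card ≤ 1 := by
        obtain ⟨x, hx⟩ := servC_shape hP
        obtain ⟨y, hy⟩ := servC_shape hP'
        rw [hx, hy]
        exact erase_sdiff_card
      exact Nat.add_le_add h1 (ih S' hS')
    · rw [if_neg hov]
      have heq : phaseFut (n-1) (r :: rest) S = phaseFut (n-1) rest S' := by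
        show (if (insert r S).card = (n-1) + 1 then S else phaseFut (n-1) rest (insert r S))
            = phaseFut (n-1) rest S'
        rw [if_neg hov]
        congr 1
        rw [hS'def]
        unfold markUpdate
        rw [if_neg hov]
      rw [heq, Finset.sdiff_self, Finset.card_empty, Nat.zero_add, Nat.zero_add]
      exact ih S' hS'

lemma initConf_shape (hn : 2 ≤ n) :
    initConf (n-1) n = Finset.univ.erase ⟨n-1, by omega⟩ := by
  ext v
  simp only [initConf, Finset.mem_filter, Finset.mem_univ, true_and, Finset.mem_erase,
    and_true]
  constructor
  · intro h hEq
    rw [hEq] at h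
    simp at h
  · intro h
    have := v.isLt
    have hne : v.val ≠ n - 1 := fun hv => h (Fin.ext hv)
    omega

lemma initConf_card (hn : 2 ≤ n) : (initConf (n-1) n).card = n - 1 := by
  rw [initConf_shape hn, Finset.card_erase_of_mem (Finset.mem_univ _), Finset.card_univ,
    Fintype.card_fin]

lemma OPT_le_resets (hn : 2 ≤ n) (σ : List (Fin n)) :
    OPT (n-1) n σ ≤ 1 + resets (n-1) σ (initConf (n-1) n) := by
  set S₀ := initConf (n-1) n with hS₀
  have hS₀card : S₀.card ≤ n - 1 := le_of_eq (initConf_card hn)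
  have hmem : listCost (initConf (n-1) n) (servL (n-1) σ S₀)
      ∈ {m | ∃ Cs, Serves (n-1) σ Cs ∧ listCost (initConf (n-1) n) Cs = m} :=
    ⟨servL (n-1) σ S₀, servL_serves hn σ S₀ hS₀card, rfl⟩
  refine le_trans (Nat.sInf_le hmem) ?_
  -- listCost init (servL σ S₀) ≤ 1 + resets
  cases σ with
  | nil => simp [servL, listCost, resets]
  | cons r rest =>
    have hk : 1 ≤ n - 1 := by omega
    set S' := markUpdate (n-1) S₀ r with hS'def
    have hS' : S'.card ≤ n - 1 := markUpdate_card hk hS₀card r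
    have hP' : (phaseFut (n-1) rest S')ᶜ.Nonempty :=
      compl_nonempty_of_card_lt (by have := phaseFut_card (n-1) rest S' hS'; omega)
    show (servC (phaseFut (n-1) rest S') \ initConf (n-1) n).card
        + listCost (servC (phaseFut (n-1) rest S')) (servL (n-1) rest S')
      ≤ 1 + ((if (insert r S₀).card = (n-1) + 1 then 1 else 0) + resets (n-1) rest S')
    have h1 : (servC (phaseFut (n-1) rest S') \ initConf (n-1) n).card ≤ 1 := by
      obtain ⟨y, hy⟩ := servC_shape hP'
      rw [hy, initConf_shape hn]
      exact erase_sdiff_card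
    have h2 : listCost (servC (phaseFut (n-1) rest S')) (servL (n-1) rest S')
        ≤ resets (n-1) rest S' := servL_cost_aux hn rest S' hS'
    omega

end PartB

section PartB2
variable {n : ℕ}

lemma sum_ite_mem_card (S : Finset (Fin n)) (a b : ℝ) :
    ∑ r : Fin n, (if r ∈ S then a else b) = (S.card:ℝ) * a + (Sᶜ.card:ℝ) * b := by
  rw [← Finset.sum_add_sum_compl S]
  have h1 : ∑ r ∈ S, (if r ∈ S then a else b) = S.card • a :=
    by rw [Finset.sum_congr rfl (fun r hr => if_pos hr), Finset.sum_const]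
  have h2 : ∑ r ∈ Sᶜ, (if r ∈ S then a else b) = Sᶜ.card • b :=
    by rw [Finset.sum_congr rfl (fun r hr => if_neg (Finset.mem_compl.mp hr)), Finset.sum_const]
  rw [h1, h2, nsmul_eq_mul, nsmul_eq_mul]

lemma expResets (hn : 2 ≤ n) : ∀ (T : ℕ) (S : Finset (Fin n)), S.Nonempty → S.card ≤ n - 1 →
    (n:ℝ) * (harmonic (n-1):ℝ) * ∑ σ : Fin T → Fin n, (resets (n-1) (List.ofFn σ) S : ℝ)
      ≤ (n:ℝ)^T * ((T:ℝ) + (n:ℝ)*(harmonic (n-1):ℝ) - (n:ℝ)*(harmonic (n - S.card):ℝ)) := by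
  have hnR : (0:ℝ) < n := by positivity
  have hH : (0:ℝ) < (harmonic (n-1):ℝ) := by
    exact_mod_cast harmonic_pos (by omega)
  intro T
  induction T with
  | zero =>
    intro S hne hS
    have h0 : ∀ σ : Fin 0 → Fin n, (resets (n-1) (List.ofFn σ) S : ℝ) = 0 := by
      intro σ
      rw [List.ofFn_zero]
      norm_num [resets]
    rw [Finset.sum_congr rfl (fun σ _ => h0 σ), Finset.sum_const, smul_zero, mul_zero,
      pow_zero, one_mul]
    have hmono : (harmonic (n - S.card):ℝ) ≤ (harmonic (n-1):ℝ) := by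
      exact_mod_cast harmonic_mono (by have := Finset.card_pos.mpr hne; omega)
    have := mul_le_mul_of_nonneg_left hmono (le_of_lt hnR)
    push_cast
    linarith
  | succ T ih =>
    intro S hne hS
    have hcard : 1 ≤ S.card := Finset.card_pos.mpr hne
    set μ : ℝ := (n:ℝ) * (harmonic (n-1):ℝ) with hμ
    have hμpos : 0 < μ := by positivity
    set R : Finset (Fin n) → ℝ :=
      fun S' => ∑ σ' : Fin T → Fin n, (resets (n-1) (List.ofFn σ') S' : ℝ) with hR
    have hsum : ∑ σ : Fin (T+1) → Fin n, (resets (n-1) (List.ofFn σ) S : ℝ)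
        = ∑ r : Fin n, ((n:ℝ)^T * (if (insert r S).card = (n-1)+1 then (1:ℝ) else 0)
            + R (markUpdate (n-1) S r)) := by
      rw [sum_fn_succ (fun σ => (resets (n-1) (List.ofFn σ) S : ℝ))]
      refine Finset.sum_congr rfl (fun r _ => ?_)
      have hterm : ∀ σ' : Fin T → Fin n,
          (resets (n-1) (List.ofFn (Fin.cons r σ')) S : ℝ)
            = (if (insert r S).card = (n-1)+1 then (1:ℝ) else 0)
              + (resets (n-1) (List.ofFn σ') (markUpdate (n-1) S r) : ℝ) := by
        intro σ'
        rw [ofFn_cons]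
        rw [show resets (n-1) (r :: List.ofFn σ') S
            = (if (insert r S).card = (n-1)+1 then 1 else 0)
              + resets (n-1) (List.ofFn σ') (markUpdate (n-1) S r) from rfl]
        push_cast [apply_ite (fun m : ℕ => (m:ℝ))]
        ring
      rw [Finset.sum_congr rfl (fun σ' _ => hterm σ'), Finset.sum_add_distrib,
        Finset.sum_const, Finset.card_univ, nsmul_eq_mul]
      have hcfun : ((Fintype.card (Fin T → Fin n) : ℕ) : ℝ) = (n:ℝ)^T := by
        rw [Fintype.card_fun, Fintype.card_fin, Fintype.card_fin]
        push_cast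
        ring
      rw [hcfun]
    rw [hsum, Finset.mul_sum]
    have hcompl : (Sᶜ.card : ℝ) = (n:ℝ) - (S.card:ℝ) := by
      rw [Finset.card_compl, Fintype.card_fin]
      push_cast [Nat.cast_sub (by omega : S.card ≤ n)]
      ring
    by_cases hfull : S.card = n - 1
    · have key : ∀ r : Fin n, μ * ((n:ℝ)^T * (if (insert r S).card = (n-1)+1 then (1:ℝ) else 0)
            + R (markUpdate (n-1) S r))
          ≤ (if r ∈ S then (n:ℝ)^T * ((T:ℝ) + μ - (n:ℝ))
              else μ * (n:ℝ)^T + (n:ℝ)^T * (T:ℝ)) := by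
        intro r
        by_cases hr : r ∈ S
        · rw [if_pos hr]
          have h1 : insert r S = S := Finset.insert_eq_self.mpr hr
          have h2 : (insert r S).card ≠ (n-1)+1 := by rw [h1, hfull]; omega
          rw [if_neg h2, mul_zero, zero_add]
          have h3 : markUpdate (n-1) S r = S := by
            unfold markUpdate; rw [if_neg h2, h1]
          rw [h3]
          have hIH := ih S hne hS
          rw [hfull] at hIH
          have hone : (harmonic (n - (n-1)) : ℝ) = 1 := by
            rw [show n - (n-1) = 1 from by omega]
            norm_num [harmonic_succ]
          rw [hone, mul_one] at hIH
          exact hIH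
        · rw [if_neg hr]
          have h2 : (insert r S).card = (n-1)+1 := by
            rw [Finset.card_insert_of_notMem hr, hfull]
          rw [if_pos h2, mul_one]
          have h3 : markUpdate (n-1) S r = {r} := by
            unfold markUpdate; rw [if_pos h2]
          rw [h3, mul_add]
          have h4 := ih {r} (Finset.singleton_nonempty r) (by simp; omega)
          rw [Finset.card_singleton] at h4
          have h6 : μ * R {r} ≤ (n:ℝ)^T * (T:ℝ) := by
            calc μ * R {r} ≤ (n:ℝ)^T * ((T:ℝ) + μ - (n:ℝ)*(harmonic (n-1):ℝ)) := h4
              _ = (n:ℝ)^T * (T:ℝ) := by rw [← hμ]; ring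
          linarith
      calc ∑ r : Fin n, μ * ((n:ℝ)^T * (if (insert r S).card = (n-1)+1 then (1:ℝ) else 0)
              + R (markUpdate (n-1) S r))
          ≤ ∑ r : Fin n, (if r ∈ S then (n:ℝ)^T * ((T:ℝ) + μ - (n:ℝ))
              else μ * (n:ℝ)^T + (n:ℝ)^T * (T:ℝ)) :=
            Finset.sum_le_sum (fun r _ => key r)
        _ = (S.card : ℝ) * ((n:ℝ)^T * ((T:ℝ) + μ - (n:ℝ)))
            + (Sᶜ.card : ℝ) * (μ * (n:ℝ)^T + (n:ℝ)^T * (T:ℝ)) := sum_ite_mem_card S _ _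
        _ ≤ (n:ℝ)^(T+1) * (((T:ℕ)+(1:ℝ)) + μ - (n:ℝ)*(harmonic (n - S.card):ℝ)) := by
            have hone : (harmonic (n - S.card) : ℝ) = 1 := by
              rw [hfull, show n - (n-1) = 1 from by omega]
              norm_num [harmonic_succ]
            have hsc : (S.card : ℝ) = (n:ℝ) - 1 := by
              rw [hfull]
              push_cast [Nat.cast_sub (by omega : 1 ≤ n)]
              ring
            rw [hone, hcompl, hsc]
            apply le_of_eq
            ring
        _ = (n:ℝ)^(T+1) * (((T+1:ℕ):ℝ) + μ - (n:ℝ)*(harmonic (n - S.card):ℝ)) := by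
            push_cast
            ring
    · -- no overflow possible this step
      have hlt : S.card < n - 1 := lt_of_le_of_ne hS hfull
      have key : ∀ r : Fin n, μ * ((n:ℝ)^T * (if (insert r S).card = (n-1)+1 then (1:ℝ) else 0)
            + R (markUpdate (n-1) S r))
          ≤ (if r ∈ S then (n:ℝ)^T * ((T:ℝ) + μ - (n:ℝ)*(harmonic (n - S.card):ℝ))
              else (n:ℝ)^T * ((T:ℝ) + μ - (n:ℝ)*(harmonic (n - (S.card+1)):ℝ))) := by
        intro r
        have h2 : (insert r S).card ≠ (n-1)+1 := by
          have := Finset.card_insert_le r S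
          omega
        rw [if_neg h2, mul_zero, zero_add]
        have h3 : markUpdate (n-1) S r = insert r S := by
          unfold markUpdate; rw [if_neg h2]
        rw [h3]
        by_cases hr : r ∈ S
        · rw [if_pos hr, Finset.insert_eq_self.mpr hr]
          exact ih S hne hS
        · rw [if_neg hr]
          have h4 := ih (insert r S) (Finset.insert_nonempty r S)
            (by rw [Finset.card_insert_of_notMem hr]; omega)
          rw [Finset.card_insert_of_notMem hr] at h4
          exact h4
      calc ∑ r : Fin n, μ * ((n:ℝ)^T * (if (insert r S).card = (n-1)+1 then (1:ℝ) else 0)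
              + R (markUpdate (n-1) S r))
          ≤ ∑ r : Fin n, (if r ∈ S then (n:ℝ)^T * ((T:ℝ) + μ - (n:ℝ)*(harmonic (n - S.card):ℝ))
              else (n:ℝ)^T * ((T:ℝ) + μ - (n:ℝ)*(harmonic (n - (S.card+1)):ℝ))) :=
            Finset.sum_le_sum (fun r _ => key r)
        _ ≤ (n:ℝ)^(T+1) * (((T+1:ℕ):ℝ) + μ - (n:ℝ)*(harmonic (n - S.card):ℝ)) := by
            rw [sum_ite_mem_card S _ _, hcompl]
            have hjR : ((n - S.card : ℕ) : ℝ) = (n:ℝ) - (S.card:ℝ) :=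
              by push_cast [Nat.cast_sub (by omega : S.card ≤ n)]; ring
            have hjpos : (0:ℝ) < (n:ℝ) - (S.card:ℝ) := by
              have : (S.card : ℝ) ≤ (n:ℝ) - 2 := by
                have h5 : S.card ≤ n - 2 := by omega
                calc (S.card:ℝ) ≤ ((n-2:ℕ):ℝ) := by exact_mod_cast h5
                  _ ≤ (n:ℝ) - 2 := by
                    push_cast [Nat.cast_sub (by omega : 2 ≤ n)]
                    ring_nf
                    exact le_refl _
              linarith
            have hHrel : (harmonic (n - S.card) : ℝ)
                = (harmonic (n - (S.card+1)) : ℝ) + ((n:ℝ) - (S.card:ℝ))⁻¹ := by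
              have h7 : n - (S.card+1) + 1 = n - S.card := by omega
              rw [← h7, harmonic_succ]
              push_cast
              rw [show ((n - (S.card+1) : ℕ):ℝ) + 1 = (n:ℝ) - (S.card:ℝ) from by
                push_cast [Nat.cast_sub (by omega : S.card + 1 ≤ n)]; ring]
            rw [hHrel]
            apply le_of_eq
            push_cast
            field_simp
            ring
      
end PartB2

lemma initConf_nonempty {n : ℕ} (hn : 2 ≤ n) : (initConf (n-1) n).Nonempty := by
  refine ⟨⟨0, by omega⟩, ?_⟩
  simp only [initConf, Finset.mem_filter, Finset.mem_univ, true_and]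
  omega

/-- No randomized online algorithm of type `(n−1, n)` is `c`-competitive for
`c < H_{n−1}`. -/
theorem no_randomized_better_than_H_n_minus_one (n : ℕ) (hn : 2 ≤ n)
    (A : RandAlg (n - 1) n) (c : ℝ) (hc : c < (harmonic (n - 1) : ℝ)) (a : ℝ) :
    ∃ σ : List (Fin n),
      c * (OPT (n - 1) n σ : ℝ) + a < expCost (n - 1) A.step σ := by
  by_contra hcon
  push_neg at hcon
  -- hcon : ∀ σ, expCost (n-1) A.step σ ≤ c * OPT + a
  have hnR : (0:ℝ) < n := by positivity
  set Hn : ℝ := (harmonic (n-1) : ℝ) with hHn_def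
  have hHn : 0 < Hn := by
    rw [hHn_def]; exact_mod_cast harmonic_pos (by omega)
  set c' : ℝ := max c 0 with hc'def
  have hc' : c' < Hn := max_lt hc hHn
  have hc'0 : (0:ℝ) ≤ c' := le_max_right c 0
  set μ : ℝ := (n:ℝ) * Hn with hμdef
  have hμpos : 0 < μ := by positivity
  obtain ⟨T, hT⟩ := exists_nat_gt ((2*μ*c' + μ*a)/(Hn - c'))
  have hTkey : 2*μ*c' + μ*a < (T:ℝ) * (Hn - c') := by
    rw [div_lt_iff₀ (by linarith)] at hT
    linarith
  set S₀ := initConf (n-1) n with hS₀def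
  have hS₀card : S₀.card = n - 1 := initConf_card hn
  set NT : ℝ := (n:ℝ)^T with hNTdef
  have hNT : 0 < NT := by positivity
  have hcardfn : ((Fintype.card (Fin T → Fin n) : ℕ) : ℝ) = NT := by
    rw [Fintype.card_fun, Fintype.card_fin, Fintype.card_fin, hNTdef]
    push_cast
    ring
  set E : ℝ := ∑ σf : Fin T → Fin n, expCost (n-1) A.step (List.ofFn σf) with hEdef
  set P : ℝ := ∑ σf : Fin T → Fin n, (OPT (n-1) n (List.ofFn σf) : ℝ) with hPdef
  set Rs : ℝ := ∑ σf : Fin T → Fin n, (resets (n-1) (List.ofFn σf) S₀ : ℝ) with hRsdef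
  -- (1)  T * NT ≤ n * E
  have h1 : (T:ℝ) * NT ≤ (n:ℝ) * E := by
    have hlow := lowerA hn A T [] S₀ hS₀card
    have hfin : ∀ σf : Fin T → Fin n,
        ecostE A.step (List.ofFn σf) [] S₀ ≠ ⊤ := fun σf => ecostE_ne_top _ _ _ _
    have hsumfin : (∑ σf : Fin T → Fin n, ecostE A.step (List.ofFn σf) [] S₀) ≠ ⊤ := by
      refine (ENNReal.sum_lt_top.mpr (fun σf _ => ?_)).ne
      exact lt_top_iff_ne_top.mpr (hfin σf)
    have hlhs_fin : ((T:ℝ≥0∞) * (n:ℝ≥0∞)^T) ≠ ⊤ := by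
      exact ENNReal.mul_ne_top (ENNReal.natCast_ne_top T)
        (ENNReal.pow_ne_top (ENNReal.natCast_ne_top n))
    have hrhs_fin : ((n:ℝ≥0∞) * ∑ σf : Fin T → Fin n, ecostE A.step (List.ofFn σf) [] S₀) ≠ ⊤ :=
      ENNReal.mul_ne_top (ENNReal.natCast_ne_top n) hsumfin
    have := (ENNReal.toReal_le_toReal hlhs_fin hrhs_fin).mpr hlow
    rw [ENNReal.toReal_mul, ENNReal.toReal_mul, ENNReal.toReal_pow,
      ENNReal.toReal_sum (fun σf _ => hfin σf)] at this
    simp only [ENNReal.toReal_natCast] at this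
    calc (T:ℝ) * NT = (T:ℝ) * (n:ℝ)^T := by rw [hNTdef]
      _ ≤ (n:ℝ) * ∑ σf : Fin T → Fin n, (ecostE A.step (List.ofFn σf) [] S₀).toReal := this
      _ = (n:ℝ) * E := by
          rw [hEdef]
          congr 1
          exact Finset.sum_congr rfl (fun σf _ => (expCost_eq (n-1) A.step (List.ofFn σf)).symm)
  -- (2)  E ≤ c' * P + a * NT
  have h2 : E ≤ c' * P + a * NT := by
    have hpt : ∀ σf : Fin T → Fin n, expCost (n-1) A.step (List.ofFn σf)
        ≤ c' * (OPT (n-1) n (List.ofFn σf) : ℝ) + a := by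
      intro σf
      refine (hcon (List.ofFn σf)).trans ?_
      have : c * (OPT (n-1) n (List.ofFn σf) : ℝ) ≤ c' * (OPT (n-1) n (List.ofFn σf) : ℝ) :=
        mul_le_mul_of_nonneg_right (le_max_left c 0) (Nat.cast_nonneg _)
      linarith
    calc E ≤ ∑ σf : Fin T → Fin n, (c' * (OPT (n-1) n (List.ofFn σf) : ℝ) + a) :=
          Finset.sum_le_sum (fun σf _ => hpt σf)
      _ = c' * P + a * NT := by
          rw [Finset.sum_add_distrib, ← Finset.mul_sum, Finset.sum_const, Finset.card_univ,
            nsmul_eq_mul, hcardfn, hPdef, mul_comm NT a]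
  -- (3)  P ≤ NT + Rs
  have h3 : P ≤ NT + Rs := by
    have hpt : ∀ σf : Fin T → Fin n, (OPT (n-1) n (List.ofFn σf) : ℝ)
        ≤ 1 + (resets (n-1) (List.ofFn σf) S₀ : ℝ) := by
      intro σf
      exact_mod_cast OPT_le_resets hn (List.ofFn σf)
    calc P ≤ ∑ σf : Fin T → Fin n, (1 + (resets (n-1) (List.ofFn σf) S₀ : ℝ)) :=
          Finset.sum_le_sum (fun σf _ => hpt σf)
      _ = NT + Rs := by
          rw [Finset.sum_add_distrib, Finset.sum_const, Finset.card_univ, nsmul_eq_mul,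
            hcardfn, mul_one, hRsdef]
  -- (4)  μ * Rs ≤ NT * (T + μ - n)
  have h4 : μ * Rs ≤ NT * ((T:ℝ) + μ - (n:ℝ)) := by
    have := expResets hn T S₀ (initConf_nonempty hn) (le_of_eq hS₀card)
    rw [hS₀card, show n - (n-1) = 1 from by omega] at this
    have hone : (harmonic 1 : ℝ) = 1 := by norm_num [harmonic_succ]
    rw [hone, mul_one] at this
    exact this
  -- combine
  have h5 : μ * ((T:ℝ) * NT) ≤ μ * ((n:ℝ) * E) :=
    mul_le_mul_of_nonneg_left h1 hμpos.le
  have h6 : μ * ((n:ℝ) * E) ≤ μ * ((n:ℝ) * (c' * P + a * NT)) :=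
    mul_le_mul_of_nonneg_left (mul_le_mul_of_nonneg_left h2 hnR.le) hμpos.le
  have h7 : (n:ℝ) * c' * (μ * P) ≤ (n:ℝ) * c' * (μ * (NT + Rs)) :=
    mul_le_mul_of_nonneg_left (mul_le_mul_of_nonneg_left h3 hμpos.le)
      (mul_nonneg hnR.le hc'0)
  have h8 : (n:ℝ) * c' * (μ * Rs) ≤ (n:ℝ) * c' * (NT * ((T:ℝ) + μ - (n:ℝ))) :=
    mul_le_mul_of_nonneg_left h4 (mul_nonneg hnR.le hc'0)
  have h9 : μ * ((T:ℝ) * NT)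
      ≤ ((n:ℝ) * c' * μ + (n:ℝ) * c' * ((T:ℝ) + μ - (n:ℝ)) + μ * (n:ℝ) * a) * NT := by
    nlinarith [h5, h6, h7, h8]
  have h10 : μ * (T:ℝ) ≤ (n:ℝ) * c' * μ + (n:ℝ) * c' * ((T:ℝ) + μ - (n:ℝ)) + μ * (n:ℝ) * a := by
    have h9' : (μ * (T:ℝ)) * NT
        ≤ ((n:ℝ) * c' * μ + (n:ℝ) * c' * ((T:ℝ) + μ - (n:ℝ)) + μ * (n:ℝ) * a) * NT := by
      calc (μ * (T:ℝ)) * NT = μ * ((T:ℝ) * NT) := by ring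
        _ ≤ _ := h9
    exact le_of_mul_le_mul_right h9' hNT
  have h11 : (T:ℝ) * (Hn - c') ≤ 2*μ*c' + μ*a := by
    have key : (n:ℝ) * ((T:ℝ) * (Hn - c')) ≤ (n:ℝ) * (2*μ*c' + μ*a) := by
      rw [hμdef] at h10 ⊢
      have hnn : (0:ℝ) ≤ (n:ℝ)*(n:ℝ)*c' := by positivity
      nlinarith [h10, hnn]
    exact le_of_mul_le_mul_left key hnR
  linarith [hTkey, h11]
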